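/- Let z : ℤ → ℝ → ℝ be a family of differentiable functions with (z_{n+1}(t) + 1)(z_n(t) − 1) + 4 ≠ 0 for all n, t, satisfying for all n ∈ ℤ and t ∈ ℝ the equation ż_n = 4(z_n² − 1)[ 2 Ω_n + (z_{n−1} − 1) Ω_{n−1} − (z_{n+1} + 1) Ω_{n+1} ], where Ω_n = 1/([(z_{n+1} + 1)(z_n − 1) + 4][(z_n + 1)(z_{n−1} − 1) + 4]). Define u_n(t) = 4(z_{n+2} + 1)(z_{n+1}² − 1)(z_n − 1) / ([(z_{n+3} + 1)(z_{n+2} − 1) + 4][(z_{n+2} + 1)(z_{n+1} − 1) + 4][(z_{n+1} + 1)(z_n − 1) + 4]) (all at time t). Then for all n ∈ ℤ and t ∈ ℝ, u̇_n = u_n (u_{n+2} + u_{n+1} − u_{n−1} − u_{n−2}), i.e., u solves the INB equation. -/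

import Mathlib

private noncomputable def Sf (z : ℤ → ℝ → ℝ) (m : ℤ) (x : ℝ) : ℝ :=
  (z (m + 1) x + 1) * (z m x - 1) / ((z (m + 1) x + 1) * (z m x - 1) + 4)

set_option maxHeartbeats 1000000 in
private lemma inb_from_minb (S u : ℤ → ℝ → ℝ)
    (hS : ∀ (m : ℤ) (τ : ℝ), HasDerivAt (S m)
      (S m τ * (1 - S m τ) * (S (m + 1) τ * S (m + 2) τ - S (m - 1) τ * S (m - 2) τ)) τ)
    (hu' : ∀ (m : ℤ) (τ : ℝ), u m τ = S m τ * S (m + 1) τ * (1 - S (m + 2) τ)) :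
    ∀ (n : ℤ) (t : ℝ), HasDerivAt (u n)
      (u n t * (u (n + 2) t + u (n + 1) t - u (n - 1) t - u (n - 2) t)) t := by
  intro n t
  have h0 := hS n t
  have h1 := hS (n + 1) t
  have h2 := hS (n + 2) t
  rw [show n + 1 + 1 = n + 2 from by ring, show n + 1 + 2 = n + 3 from by ring,
    show n + 1 - 1 = n from by ring, show n + 1 - 2 = n - 1 from by ring] at h1
  rw [show n + 2 + 1 = n + 3 from by ring, show n + 2 + 2 = n + 4 from by ring,
    show n + 2 - 1 = n + 1 from by ring, show n + 2 - 2 = n from by ring] at h2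
  have hfun : u n = fun x => S n x * S (n + 1) x * (1 - S (n + 2) x) := funext (hu' n)
  have hv2 : u (n + 2) t = S (n + 2) t * S (n + 3) t * (1 - S (n + 4) t) := by
    rw [hu' (n + 2) t, show n + 2 + 1 = n + 3 from by ring, show n + 2 + 2 = n + 4 from by ring]
  have hv1 : u (n + 1) t = S (n + 1) t * S (n + 2) t * (1 - S (n + 3) t) := by
    rw [hu' (n + 1) t, show n + 1 + 1 = n + 2 from by ring, show n + 1 + 2 = n + 3 from by ring]
  have hvm1 : u (n - 1) t = S (n - 1) t * S n t * (1 - S (n + 1) t) := by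
    rw [hu' (n - 1) t, show n - 1 + 1 = n from by ring, show n - 1 + 2 = n + 1 from by ring]
  have hvm2 : u (n - 2) t = S (n - 2) t * S (n - 1) t * (1 - S n t) := by
    rw [hu' (n - 2) t, show n - 2 + 1 = n - 1 from by ring, show n - 2 + 2 = n from by ring]
  rw [hv2, hv1, hvm1, hvm2, hu' n t, hfun]
  have hD := (h0.mul h1).mul (h2.const_sub 1)
  refine hD.congr_deriv ?_
  simp only [Pi.mul_apply]
  ring

set_option maxHeartbeats 2000000 in
private lemma miura_step (z : ℤ → ℝ → ℝ)
    (hzne : ∀ (n : ℤ) (t : ℝ), (z (n + 1) t + 1) * (z n t - 1) + 4 ≠ 0)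
    (Ω : ℤ → ℝ → ℝ)
    (hΩ : ∀ (n : ℤ) (t : ℝ), Ω n t =
      1 / (((z (n + 1) t + 1) * (z n t - 1) + 4) * ((z n t + 1) * (z (n - 1) t - 1) + 4)))
    (hz : ∀ (n : ℤ) (t : ℝ), HasDerivAt (z n)
      (4 * ((z n t) ^ 2 - 1) * (2 * Ω n t + (z (n - 1) t - 1) * Ω (n - 1) t
        - (z (n + 1) t + 1) * Ω (n + 1) t)) t) :
    ∀ (m : ℤ) (τ : ℝ), HasDerivAt (Sf z m)
      (Sf z m τ * (1 - Sf z m τ) *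
        (Sf z (m + 1) τ * Sf z (m + 2) τ - Sf z (m - 1) τ * Sf z (m - 2) τ)) τ := by
  intro m τ
  -- clean Ω expansions
  have hOm : Ω m τ = 1 / (((z (m + 1) τ + 1) * (z m τ - 1) + 4) * ((z m τ + 1) * (z (m - 1) τ - 1) + 4)) := hΩ m τ
  have hOm1 : Ω (m - 1) τ = 1 / (((z m τ + 1) * (z (m - 1) τ - 1) + 4) * ((z (m - 1) τ + 1) * (z (m - 2) τ - 1) + 4)) := by
    rw [hΩ, show m - 1 + 1 = m from by ring, show m - 1 - 1 = m - 2 from by ring]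
  have hOp1 : Ω (m + 1) τ = 1 / (((z (m + 2) τ + 1) * (z (m + 1) τ - 1) + 4) * ((z (m + 1) τ + 1) * (z m τ - 1) + 4)) := by
    rw [hΩ, show m + 1 + 1 = m + 2 from by ring, show m + 1 - 1 = m from by ring]
  have hOp2 : Ω (m + 2) τ = 1 / (((z (m + 3) τ + 1) * (z (m + 2) τ - 1) + 4) * ((z (m + 2) τ + 1) * (z (m + 1) τ - 1) + 4)) := by
    rw [hΩ, show m + 2 + 1 = m + 3 from by ring, show m + 2 - 1 = m + 1 from by ring]
  -- clean derivative hypotheses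
  have h0 := hz m τ
  have h1 := hz (m + 1) τ
  rw [show m + 1 - 1 = m from by ring, show m + 1 + 1 = m + 2 from by ring] at h1
  rw [hOm, hOm1, hOp1] at h0
  rw [hOp1, hOm, hOp2] at h1
  -- nonzero denominators
  have hAm2 : (z (m - 1) τ + 1) * (z (m - 2) τ - 1) + 4 ≠ 0 := by
    have := hzne (m - 2) τ; rwa [show m - 2 + 1 = m - 1 from by ring] at this
  have hAm1 : (z m τ + 1) * (z (m - 1) τ - 1) + 4 ≠ 0 := by
    have := hzne (m - 1) τ; rwa [show m - 1 + 1 = m from by ring] at this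
  have hA0 : (z (m + 1) τ + 1) * (z m τ - 1) + 4 ≠ 0 := hzne m τ
  have hA1 : (z (m + 2) τ + 1) * (z (m + 1) τ - 1) + 4 ≠ 0 := by
    have := hzne (m + 1) τ; rwa [show m + 1 + 1 = m + 2 from by ring] at this
  have hA2 : (z (m + 3) τ + 1) * (z (m + 2) τ - 1) + 4 ≠ 0 := by
    have := hzne (m + 2) τ; rwa [show m + 2 + 1 = m + 3 from by ring] at this
  -- derivative via quotient rule
  have hNum := (h1.add_const 1).mul (h0.sub_const 1)
  have hDen := ((h1.add_const 1).mul (h0.sub_const 1)).add_const 4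
  have hd := hNum.div hDen hA0
  refine hd.congr_deriv ?_
  symm
  have hstep : ∀ w : ℝ, (w * ((z (m + 1) τ + 1) * (z m τ - 1) + 4)
      - (z (m + 1) τ + 1) * (z m τ - 1) * w) / ((z (m + 1) τ + 1) * (z m τ - 1) + 4) ^ 2
      = 4 * w / ((z (m + 1) τ + 1) * (z m τ - 1) + 4) ^ 2 := by
    intro w
    rw [div_eq_div_iff (pow_ne_zero 2 hA0) (pow_ne_zero 2 hA0)]
    ring
  simp only [Pi.mul_apply]
  rw [hstep]
  simp only [Sf, show m + 1 + 1 = m + 2 from by ring, show m + 2 + 1 = m + 3 from by ring,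
    show m - 1 + 1 = m from by ring, show m - 2 + 1 = m - 1 from by ring]
  rw [eq_div_iff (pow_ne_zero 2 hA0)]
  simp only [div_eq_mul_inv, mul_inv, one_mul]
  set r2 : ℝ := ((z (m + 3) τ + 1) * (z (m + 2) τ - 1) + 4)⁻¹ with hr2def
  set r1 : ℝ := ((z (m + 2) τ + 1) * (z (m + 1) τ - 1) + 4)⁻¹ with hr1def
  set r0 : ℝ := ((z (m + 1) τ + 1) * (z m τ - 1) + 4)⁻¹ with hr0def
  set rm1 : ℝ := ((z m τ + 1) * (z (m - 1) τ - 1) + 4)⁻¹ with hrm1def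
  set rm2 : ℝ := ((z (m - 1) τ + 1) * (z (m - 2) τ - 1) + 4)⁻¹ with hrm2def
  have hr2 : ((z (m + 3) τ + 1) * (z (m + 2) τ - 1) + 4) * r2 = 1 := mul_inv_cancel₀ hA2
  have hr1 : ((z (m + 2) τ + 1) * (z (m + 1) τ - 1) + 4) * r1 = 1 := mul_inv_cancel₀ hA1
  have hr0 : ((z (m + 1) τ + 1) * (z m τ - 1) + 4) * r0 = 1 := mul_inv_cancel₀ hA0
  have hrm1 : ((z m τ + 1) * (z (m - 1) τ - 1) + 4) * rm1 = 1 := mul_inv_cancel₀ hAm1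
  have hrm2 : ((z (m - 1) τ + 1) * (z (m - 2) τ - 1) + 4) * rm2 = 1 := mul_inv_cancel₀ hAm2
  linear_combination ((-9)*rm1*r0 + (-9)*rm1*r0*r0 + (-3)*z (m + 1) τ*rm1*r0 + (-12)*z (m + 1) τ*rm1*r0*r0 + (5)*z (m + 1) τ*z (m + 1) τ*rm1*r0 + (2)*z (m + 1) τ*z (m + 1) τ*rm1*r0*r0 - z (m + 1) τ*z (m + 1) τ*z (m + 1) τ*rm1*r0 + (4)*z (m + 1) τ*z (m + 1) τ*z (m + 1) τ*rm1*r0*r0 - z (m + 1) τ*z (m + 1) τ*z (m + 1) τ*z (m + 1) τ*rm1*r0*r0 + (-6)*z m τ*rm1*r0 + (3)*z m τ*rm1*r0*r0 + (-10)*z m τ*z (m + 1) τ*rm1*r0 + (-4)*z m τ*z (m + 1) τ*rm1*r0*r0 + (-2)*z m τ*z (m + 1) τ*z (m + 1) τ*rm1*r0 + (-14)*z m τ*z (m + 1) τ*z (m + 1) τ*rm1*r0*r0 + (2)*z m τ*z (m + 1) τ*z (m + 1) τ*z (m + 1) τ*rm1*r0 + (-4)*z m τ*z (m + 1) τ*z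 (m + 1) τ*z (m + 1) τ*rm1*r0*r0 + (3)*z m τ*z (m + 1) τ*z (m + 1) τ*z (m + 1) τ*z (m + 1) τ*rm1*r0*r0 + (8)*z m τ*z m τ*rm1*r0 + (14)*z m τ*z m τ*rm1*r0*r0 + (24)*z m τ*z m τ*z (m + 1) τ*rm1*r0*r0 + (-8)*z m τ*z m τ*z (m + 1) τ*z (m + 1) τ*rm1*r0 + (4)*z m τ*z m τ*z (m + 1) τ*z (m + 1) τ*rm1*r0*r0 + (-8)*z m τ*z m τ*z (m + 1) τ*z (m + 1) τ*z (m + 1) τ*rm1*r0*r0 + (-2)*z m τ*z m τ*z (m + 1) τ*z (m + 1) τ*z (m + 1) τ*z (m + 1) τ*rm1*r0*r0 + (6)*z m τ*z m τ*z m τ*rm1*r0 + (-2)*z m τ*z m τ*z m τ*rm1*r0*r0 + (10)*z m τ*z m τ*z m τ*z (m + 1) τ*rm1*r0 + (8)*z m τ*z m τ*z m τ*z (m + 1) τ*rm1*r0*r0 + (2)*z m τ*z m τ*z m τ*z (m + 1) τ*z (m + 1) τ*rm1*r0 + (20)*z m τ*z m τ*z m τ*z (m + 1) τ*z (m + 1)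 τ*rm1*r0*r0 + (-2)*z m τ*z m τ*z m τ*z (m + 1) τ*z (m + 1) τ*z (m + 1) τ*rm1*r0 + (8)*z m τ*z m τ*z m τ*z (m + 1) τ*z (m + 1) τ*z (m + 1) τ*rm1*r0*r0 + (-2)*z m τ*z m τ*z m τ*z (m + 1) τ*z (m + 1) τ*z (m + 1) τ*z (m + 1) τ*rm1*r0*r0 + z m τ*z m τ*z m τ*z m τ*rm1*r0 + (-5)*z m τ*z m τ*z m τ*z m τ*rm1*r0*r0 + (3)*z m τ*z m τ*z m τ*z m τ*z (m + 1) τ*rm1*r0 + (-12)*z m τ*z m τ*z m τ*z m τ*z (m + 1) τ*rm1*r0*r0 + (3)*z m τ*z m τ*z m τ*z m τ*z (m + 1) τ*z (m + 1) τ*rm1*r0 + (-6)*z m τ*z m τ*z m τ*z m τ*z (m + 1) τ*z (m + 1) τ*rm1*r0*r0 + z m τ*z m τ*z m τ*z m τ*z (m + 1) τ*z (m + 1) τ*z (m + 1) τ*rm1*r0 + (4)*z m τ*z m τ*z m τ*z m τ*z (m + 1) τ*z (m + 1) τ*z (m + 1) τ*rm1*r0*r0 + (3)*z m τ*z m τ*z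 m τ*z m τ*z (m + 1) τ*z (m + 1) τ*z (m + 1) τ*z (m + 1) τ*rm1*r0*r0 - z m τ*z m τ*z m τ*z m τ*z m τ*rm1*r0*r0 + (-4)*z m τ*z m τ*z m τ*z m τ*z m τ*z (m + 1) τ*rm1*r0*r0 + (-6)*z m τ*z m τ*z m τ*z m τ*z m τ*z (m + 1) τ*z (m + 1) τ*rm1*r0*r0 + (-4)*z m τ*z m τ*z m τ*z m τ*z m τ*z (m + 1) τ*z (m + 1) τ*z (m + 1) τ*rm1*r0*r0 - z m τ*z m τ*z m τ*z m τ*z m τ*z (m + 1) τ*z (m + 1) τ*z (m + 1) τ*z (m + 1) τ*rm1*r0*r0 + (9)*z (m - 1) τ*rm1*r0 + (9)*z (m - 1) τ*rm1*r0*r0 + (3)*z (m - 1) τ*z (m + 1) τ*rm1*r0 + (12)*z (m - 1) τ*z (m + 1) τ*rm1*r0*r0 + (-5)*z (m - 1) τ*z (m + 1) τ*z (m + 1) τ*rm1*r0 + (-2)*z (m - 1) τ*z (m + 1) τ*z (m + 1) τ*rm1*r0*r0 + z (m - 1) τ*z (m + 1) τ*z (m + 1) τ*z (m + 1) τ*rm1*r0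 + (-4)*z (m - 1) τ*z (m + 1) τ*z (m + 1) τ*z (m + 1) τ*rm1*r0*r0 + z (m - 1) τ*z (m + 1) τ*z (m + 1) τ*z (m + 1) τ*z (m + 1) τ*rm1*r0*r0 + (6)*z (m - 1) τ*z m τ*rm1*r0 + (-3)*z (m - 1) τ*z m τ*rm1*r0*r0 + (10)*z (m - 1) τ*z m τ*z (m + 1) τ*rm1*r0 + (4)*z (m - 1) τ*z m τ*z (m + 1) τ*rm1*r0*r0 + (2)*z (m - 1) τ*z m τ*z (m + 1) τ*z (m + 1) τ*rm1*r0 + (14)*z (m - 1) τ*z m τ*z (m + 1) τ*z (m + 1) τ*rm1*r0*r0 + (-2)*z (m - 1) τ*z m τ*z (m + 1) τ*z (m + 1) τ*z (m + 1) τ*rm1*r0 + (4)*z (m - 1) τ*z m τ*z (m + 1) τ*z (m + 1) τ*z (m + 1) τ*rm1*r0*r0 + (-3)*z (m - 1) τ*z m τ*z (m + 1) τ*z (m + 1) τ*z (m + 1) τ*z (m + 1) τ*rm1*r0*r0 + (-8)*z (m - 1) τ*z m τ*z m τ*rm1*r0 + (-14)*z (m - 1) τ*z m τ*z m τ*rm1*r0*r0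 + (-24)*z (m - 1) τ*z m τ*z m τ*z (m + 1) τ*rm1*r0*r0 + (8)*z (m - 1) τ*z m τ*z m τ*z (m + 1) τ*z (m + 1) τ*rm1*r0 + (-4)*z (m - 1) τ*z m τ*z m τ*z (m + 1) τ*z (m + 1) τ*rm1*r0*r0 + (8)*z (m - 1) τ*z m τ*z m τ*z (m + 1) τ*z (m + 1) τ*z (m + 1) τ*rm1*r0*r0 + (2)*z (m - 1) τ*z m τ*z m τ*z (m + 1) τ*z (m + 1) τ*z (m + 1) τ*z (m + 1) τ*rm1*r0*r0 + (-6)*z (m - 1) τ*z m τ*z m τ*z m τ*rm1*r0 + (2)*z (m - 1) τ*z m τ*z m τ*z m τ*rm1*r0*r0 + (-10)*z (m - 1) τ*z m τ*z m τ*z m τ*z (m + 1) τ*rm1*r0 + (-8)*z (m - 1) τ*z m τ*z m τ*z m τ*z (m + 1) τ*rm1*r0*r0 + (-2)*z (m - 1) τ*z m τ*z m τ*z m τ*z (m + 1) τ*z (m + 1) τ*rm1*r0 + (-20)*z (m - 1) τ*z m τ*z m τ*z m τ*z (m + 1) τ*z (m + 1) τ*rm1*r0*r0 + (2)*z (m -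 1) τ*z m τ*z m τ*z m τ*z (m + 1) τ*z (m + 1) τ*z (m + 1) τ*rm1*r0 + (-8)*z (m - 1) τ*z m τ*z m τ*z m τ*z (m + 1) τ*z (m + 1) τ*z (m + 1) τ*rm1*r0*r0 + (2)*z (m - 1) τ*z m τ*z m τ*z m τ*z (m + 1) τ*z (m + 1) τ*z (m + 1) τ*z (m + 1) τ*rm1*r0*r0 - z (m - 1) τ*z m τ*z m τ*z m τ*z m τ*rm1*r0 + (5)*z (m - 1) τ*z m τ*z m τ*z m τ*z m τ*rm1*r0*r0 + (-3)*z (m - 1) τ*z m τ*z m τ*z m τ*z m τ*z (m + 1) τ*rm1*r0 + (12)*z (m - 1) τ*z m τ*z m τ*z m τ*z m τ*z (m + 1) τ*rm1*r0*r0 + (-3)*z (m - 1) τ*z m τ*z m τ*z m τ*z m τ*z (m + 1) τ*z (m + 1) τ*rm1*r0 + (6)*z (m - 1) τ*z m τ*z m τ*z m τ*z m τ*z (m + 1) τ*z (m + 1) τ*rm1*r0*r0 - z (m - 1) τ*z m τ*z m τ*z m τ*z m τ*z (m + 1) τ*z (m + 1) τ*z (m + 1) τ*rm1*r0 + (-4)*z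 (m - 1) τ*z m τ*z m τ*z m τ*z m τ*z (m + 1) τ*z (m + 1) τ*z (m + 1) τ*rm1*r0*r0 + (-3)*z (m - 1) τ*z m τ*z m τ*z m τ*z m τ*z (m + 1) τ*z (m + 1) τ*z (m + 1) τ*z (m + 1) τ*rm1*r0*r0 + z (m - 1) τ*z m τ*z m τ*z m τ*z m τ*z m τ*rm1*r0*r0 + (4)*z (m - 1) τ*z m τ*z m τ*z m τ*z m τ*z m τ*z (m + 1) τ*rm1*r0*r0 + (6)*z (m - 1) τ*z m τ*z m τ*z m τ*z m τ*z m τ*z (m + 1) τ*z (m + 1) τ*rm1*r0*r0 + (4)*z (m - 1) τ*z m τ*z m τ*z m τ*z m τ*z m τ*z (m + 1) τ*z (m + 1) τ*z (m + 1) τ*rm1*r0*r0 + z (m - 1) τ*z m τ*z m τ*z m τ*z m τ*z m τ*z (m + 1) τ*z (m + 1) τ*z (m + 1) τ*z (m + 1) τ*rm1*r0*r0) * hrm2 + ((9)*r0 + (9)*r0*r0 + (16)*rm2 + (-36)*rm2*r0 + (-36)*rm2*r0*r0 + (3)*z (m + 1) τ*r0 + (12)*z (m + 1) τ*r0*r0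 + (16)*z (m + 1) τ*rm2 + (-12)*z (m + 1) τ*rm2*r0 + (-48)*z (m + 1) τ*rm2*r0*r0 + (-5)*z (m + 1) τ*z (m + 1) τ*r0 + (-2)*z (m + 1) τ*z (m + 1) τ*r0*r0 + (20)*z (m + 1) τ*z (m + 1) τ*rm2*r0 + (8)*z (m + 1) τ*z (m + 1) τ*rm2*r0*r0 + z (m + 1) τ*z (m + 1) τ*z (m + 1) τ*r0 + (-4)*z (m + 1) τ*z (m + 1) τ*z (m + 1) τ*r0*r0 + (-4)*z (m + 1) τ*z (m + 1) τ*z (m + 1) τ*rm2*r0 + (16)*z (m + 1) τ*z (m + 1) τ*z (m + 1) τ*rm2*r0*r0 + z (m + 1) τ*z (m + 1) τ*z (m + 1) τ*z (m + 1) τ*r0*r0 + (-4)*z (m + 1) τ*z (m + 1) τ*z (m + 1) τ*z (m + 1) τ*rm2*r0*r0 + (-3)*z m τ*r0 + (-12)*z m τ*r0*r0 + (-16)*z m τ*rm2 + (12)*z m τ*rm2*r0 + (48)*z m τ*rm2*r0*r0 + (7)*z m τ*z (m + 1) τ*r0 + (-8)*z m τ*z (m + 1) τ*r0*r0 + (-16)*z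 m τ*z (m + 1) τ*rm2 + (-28)*z m τ*z (m + 1) τ*rm2*r0 + (32)*z m τ*z (m + 1) τ*rm2*r0*r0 + (7)*z m τ*z (m + 1) τ*z (m + 1) τ*r0 + (16)*z m τ*z (m + 1) τ*z (m + 1) τ*r0*r0 + (-28)*z m τ*z (m + 1) τ*z (m + 1) τ*rm2*r0 + (-64)*z m τ*z (m + 1) τ*z (m + 1) τ*rm2*r0*r0 + (-3)*z m τ*z (m + 1) τ*z (m + 1) τ*z (m + 1) τ*r0 + (8)*z m τ*z (m + 1) τ*z (m + 1) τ*z (m + 1) τ*r0*r0 + (12)*z m τ*z (m + 1) τ*z (m + 1) τ*z (m + 1) τ*rm2*r0 + (-32)*z m τ*z (m + 1) τ*z (m + 1) τ*z (m + 1) τ*rm2*r0*r0 + (-4)*z m τ*z (m + 1) τ*z (m + 1) τ*z (m + 1) τ*z (m + 1) τ*r0*r0 + (16)*z m τ*z (m + 1) τ*z (m + 1) τ*z (m + 1) τ*z (m + 1) τ*rm2*r0*r0 + (-5)*z m τ*z m τ*r0 + (-2)*z m τ*z m τ*r0*r0 + (20)*z m τ*z m τ*rm2*r0 + (8)*z m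 τ*z m τ*rm2*r0*r0 + (-7)*z m τ*z m τ*z (m + 1) τ*r0 + (-16)*z m τ*z m τ*z (m + 1) τ*r0*r0 + (28)*z m τ*z m τ*z (m + 1) τ*rm2*r0 + (64)*z m τ*z m τ*z (m + 1) τ*rm2*r0*r0 + z m τ*z m τ*z (m + 1) τ*z (m + 1) τ*r0 + (-20)*z m τ*z m τ*z (m + 1) τ*z (m + 1) τ*r0*r0 + (-4)*z m τ*z m τ*z (m + 1) τ*z (m + 1) τ*rm2*r0 + (80)*z m τ*z m τ*z (m + 1) τ*z (m + 1) τ*rm2*r0*r0 + (3)*z m τ*z m τ*z (m + 1) τ*z (m + 1) τ*z (m + 1) τ*r0 + (-12)*z m τ*z m τ*z (m + 1) τ*z (m + 1) τ*z (m + 1) τ*rm2*r0 + (6)*z m τ*z m τ*z (m + 1) τ*z (m + 1) τ*z (m + 1) τ*z (m + 1) τ*r0*r0 + (-24)*z m τ*z m τ*z (m + 1) τ*z (m + 1) τ*z (m + 1) τ*z (m + 1) τ*rm2*r0*r0 - z m τ*z m τ*z m τ*r0 + (4)*z m τ*z m τ*z m τ*r0*r0 + (4)*z m τ*z m τ*z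 m τ*rm2*r0 + (-16)*z m τ*z m τ*z m τ*rm2*r0*r0 + (-3)*z m τ*z m τ*z m τ*z (m + 1) τ*r0 + (8)*z m τ*z m τ*z m τ*z (m + 1) τ*r0*r0 + (12)*z m τ*z m τ*z m τ*z (m + 1) τ*rm2*r0 + (-32)*z m τ*z m τ*z m τ*z (m + 1) τ*rm2*r0*r0 + (-3)*z m τ*z m τ*z m τ*z (m + 1) τ*z (m + 1) τ*r0 + (12)*z m τ*z m τ*z m τ*z (m + 1) τ*z (m + 1) τ*rm2*r0 - z m τ*z m τ*z m τ*z (m + 1) τ*z (m + 1) τ*z (m + 1) τ*r0 + (-8)*z m τ*z m τ*z m τ*z (m + 1) τ*z (m + 1) τ*z (m + 1) τ*r0*r0 + (4)*z m τ*z m τ*z m τ*z (m + 1) τ*z (m + 1) τ*z (m + 1) τ*rm2*r0 + (32)*z m τ*z m τ*z m τ*z (m + 1) τ*z (m + 1) τ*z (m + 1) τ*rm2*r0*r0 + (-4)*z m τ*z m τ*z m τ*z (m + 1) τ*z (m + 1) τ*z (m + 1) τ*z (m + 1) τ*r0*r0 + (16)*z m τ*z m τ*z m τ*z (m + 1) τ*z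 (m + 1) τ*z (m + 1) τ*z (m + 1) τ*rm2*r0*r0 + z m τ*z m τ*z m τ*z m τ*r0*r0 + (-4)*z m τ*z m τ*z m τ*z m τ*rm2*r0*r0 + (4)*z m τ*z m τ*z m τ*z m τ*z (m + 1) τ*r0*r0 + (-16)*z m τ*z m τ*z m τ*z m τ*z (m + 1) τ*rm2*r0*r0 + (6)*z m τ*z m τ*z m τ*z m τ*z (m + 1) τ*z (m + 1) τ*r0*r0 + (-24)*z m τ*z m τ*z m τ*z m τ*z (m + 1) τ*z (m + 1) τ*rm2*r0*r0 + (4)*z m τ*z m τ*z m τ*z m τ*z (m + 1) τ*z (m + 1) τ*z (m + 1) τ*r0*r0 + (-16)*z m τ*z m τ*z m τ*z m τ*z (m + 1) τ*z (m + 1) τ*z (m + 1) τ*rm2*r0*r0 + z m τ*z m τ*z m τ*z m τ*z (m + 1) τ*z (m + 1) τ*z (m + 1) τ*z (m + 1) τ*r0*r0 + (-4)*z m τ*z m τ*z m τ*z m τ*z (m + 1) τ*z (m + 1) τ*z (m + 1) τ*z (m + 1) τ*rm2*r0*r0) * hrm1 + ((4)*1 + (-16)*r1 + (-4)*r1*r2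 + (3)*r0 + (-3)*r0*r1*r2 + (-12)*rm1*r0 + (-16)*rm2 + (-12)*rm2*r0 + (64)*rm2*rm1 + (48)*rm2*rm1*r0 + (-4)*z (m + 3) τ*r1*r2 + (-3)*z (m + 3) τ*r0*r1*r2 + (4)*z (m + 2) τ*z (m + 2) τ*r1*r2 + (3)*z (m + 2) τ*z (m + 2) τ*r0*r1*r2 + (4)*z (m + 2) τ*z (m + 2) τ*z (m + 3) τ*r1*r2 + (3)*z (m + 2) τ*z (m + 2) τ*z (m + 3) τ*r0*r1*r2 + (4)*z (m + 1) τ + (-16)*z (m + 1) τ*r1 + (5)*z (m + 1) τ*r0 + (-2)*z (m + 1) τ*r0*r1*r2 + (-20)*z (m + 1) τ*rm1*r0 + (-16)*z (m + 1) τ*rm2 + (-20)*z (m + 1) τ*rm2*r0 + (64)*z (m + 1) τ*rm2*rm1 + (80)*z (m + 1) τ*rm2*rm1*r0 + (-2)*z (m + 1) τ*z (m + 3) τ*r0*r1*r2 + (2)*z (m + 1) τ*z (m + 2) τ*z (m + 2) τ*r0*r1*r2 + (2)*z (m + 1) τ*z (m + 2) τ*z (m + 2) τ*z (m + 3) τ*r0*r1*r2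 + (4)*z (m + 1) τ*z (m + 1) τ*r1*r2 + z (m + 1) τ*z (m + 1) τ*r0 + (4)*z (m + 1) τ*z (m + 1) τ*r0*r1*r2 + (-4)*z (m + 1) τ*z (m + 1) τ*rm1*r0 + (-4)*z (m + 1) τ*z (m + 1) τ*rm2*r0 + (16)*z (m + 1) τ*z (m + 1) τ*rm2*rm1*r0 + (4)*z (m + 1) τ*z (m + 1) τ*z (m + 3) τ*r1*r2 + (4)*z (m + 1) τ*z (m + 1) τ*z (m + 3) τ*r0*r1*r2 + (-4)*z (m + 1) τ*z (m + 1) τ*z (m + 2) τ*z (m + 2) τ*r1*r2 + (-4)*z (m + 1) τ*z (m + 1) τ*z (m + 2) τ*z (m + 2) τ*r0*r1*r2 + (-4)*z (m + 1) τ*z (m + 1) τ*z (m + 2) τ*z (m + 2) τ*z (m + 3) τ*r1*r2 + (-4)*z (m + 1) τ*z (m + 1) τ*z (m + 2) τ*z (m + 2) τ*z (m + 3) τ*r0*r1*r2 - z (m + 1) τ*z (m + 1) τ*z (m + 1) τ*r0 + (2)*z (m + 1) τ*z (m + 1) τ*z (m + 1) τ*r0*r1*r2 + (4)*z (m + 1)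 τ*z (m + 1) τ*z (m + 1) τ*rm1*r0 + (4)*z (m + 1) τ*z (m + 1) τ*z (m + 1) τ*rm2*r0 + (-16)*z (m + 1) τ*z (m + 1) τ*z (m + 1) τ*rm2*rm1*r0 + (2)*z (m + 1) τ*z (m + 1) τ*z (m + 1) τ*z (m + 3) τ*r0*r1*r2 + (-2)*z (m + 1) τ*z (m + 1) τ*z (m + 1) τ*z (m + 2) τ*z (m + 2) τ*r0*r1*r2 + (-2)*z (m + 1) τ*z (m + 1) τ*z (m + 1) τ*z (m + 2) τ*z (m + 2) τ*z (m + 3) τ*r0*r1*r2 - z (m + 1) τ*z (m + 1) τ*z (m + 1) τ*z (m + 1) τ*r0*r1*r2 - z (m + 1) τ*z (m + 1) τ*z (m + 1) τ*z (m + 1) τ*z (m + 3) τ*r0*r1*r2 + z (m + 1) τ*z (m + 1) τ*z (m + 1) τ*z (m + 1) τ*z (m + 2) τ*z (m + 2) τ*r0*r1*r2 + z (m + 1) τ*z (m + 1) τ*z (m + 1) τ*z (m + 1) τ*z (m + 2) τ*z (m + 2) τ*z (m + 3) τ*r0*r1*r2 + (-4)*z m τ + (16)*z m τ*r1 + (4)*z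 m τ*r1*r2 + (-5)*z m τ*r0 + (5)*z m τ*r0*r1*r2 + (20)*z m τ*rm1*r0 + (16)*z m τ*rm2 + (20)*z m τ*rm2*r0 + (-64)*z m τ*rm2*rm1 + (-80)*z m τ*rm2*rm1*r0 + (4)*z m τ*z (m + 3) τ*r1*r2 + (5)*z m τ*z (m + 3) τ*r0*r1*r2 + (-4)*z m τ*z (m + 2) τ*z (m + 2) τ*r1*r2 + (-5)*z m τ*z (m + 2) τ*z (m + 2) τ*r0*r1*r2 + (-4)*z m τ*z (m + 2) τ*z (m + 2) τ*z (m + 3) τ*r1*r2 + (-5)*z m τ*z (m + 2) τ*z (m + 2) τ*z (m + 3) τ*r0*r1*r2 + (-4)*z m τ*z (m + 1) τ + (16)*z m τ*z (m + 1) τ*r1 + (-7)*z m τ*z (m + 1) τ*r0 + (2)*z m τ*z (m + 1) τ*r0*r1*r2 + (28)*z m τ*z (m + 1) τ*rm1*r0 + (16)*z m τ*z (m + 1) τ*rm2 + (28)*z m τ*z (m + 1) τ*rm2*r0 + (-64)*z m τ*z (m + 1) τ*rm2*rm1 + (-112)*z m τ*z (m + 1) τ*rm2*rm1*r0 + (2)*z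 m τ*z (m + 1) τ*z (m + 3) τ*r0*r1*r2 + (-2)*z m τ*z (m + 1) τ*z (m + 2) τ*z (m + 2) τ*r0*r1*r2 + (-2)*z m τ*z (m + 1) τ*z (m + 2) τ*z (m + 2) τ*z (m + 3) τ*r0*r1*r2 + (-4)*z m τ*z (m + 1) τ*z (m + 1) τ*r1*r2 + z m τ*z (m + 1) τ*z (m + 1) τ*r0 + (-8)*z m τ*z (m + 1) τ*z (m + 1) τ*r0*r1*r2 + (-4)*z m τ*z (m + 1) τ*z (m + 1) τ*rm1*r0 + (-4)*z m τ*z (m + 1) τ*z (m + 1) τ*rm2*r0 + (16)*z m τ*z (m + 1) τ*z (m + 1) τ*rm2*rm1*r0 + (-4)*z m τ*z (m + 1) τ*z (m + 1) τ*z (m + 3) τ*r1*r2 + (-8)*z m τ*z (m + 1) τ*z (m + 1) τ*z (m + 3) τ*r0*r1*r2 + (4)*z m τ*z (m + 1) τ*z (m + 1) τ*z (m + 2) τ*z (m + 2) τ*r1*r2 + (8)*z m τ*z (m + 1) τ*z (m + 1) τ*z (m + 2) τ*z (m + 2) τ*r0*r1*r2 + (4)*z m τ*z (m + 1) τ*z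 (m + 1) τ*z (m + 2) τ*z (m + 2) τ*z (m + 3) τ*r1*r2 + (8)*z m τ*z (m + 1) τ*z (m + 1) τ*z (m + 2) τ*z (m + 2) τ*z (m + 3) τ*r0*r1*r2 + (3)*z m τ*z (m + 1) τ*z (m + 1) τ*z (m + 1) τ*r0 + (-2)*z m τ*z (m + 1) τ*z (m + 1) τ*z (m + 1) τ*r0*r1*r2 + (-12)*z m τ*z (m + 1) τ*z (m + 1) τ*z (m + 1) τ*rm1*r0 + (-12)*z m τ*z (m + 1) τ*z (m + 1) τ*z (m + 1) τ*rm2*r0 + (48)*z m τ*z (m + 1) τ*z (m + 1) τ*z (m + 1) τ*rm2*rm1*r0 + (-2)*z m τ*z (m + 1) τ*z (m + 1) τ*z (m + 1) τ*z (m + 3) τ*r0*r1*r2 + (2)*z m τ*z (m + 1) τ*z (m + 1) τ*z (m + 1) τ*z (m + 2) τ*z (m + 2) τ*r0*r1*r2 + (2)*z m τ*z (m + 1) τ*z (m + 1) τ*z (m + 1) τ*z (m + 2) τ*z (m + 2) τ*z (m + 3) τ*r0*r1*r2 + (3)*z m τ*z (m + 1) τ*z (m + 1) τ*z (m + 1)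 τ*z (m + 1) τ*r0*r1*r2 + (3)*z m τ*z (m + 1) τ*z (m + 1) τ*z (m + 1) τ*z (m + 1) τ*z (m + 3) τ*r0*r1*r2 + (-3)*z m τ*z (m + 1) τ*z (m + 1) τ*z (m + 1) τ*z (m + 1) τ*z (m + 2) τ*z (m + 2) τ*r0*r1*r2 + (-3)*z m τ*z (m + 1) τ*z (m + 1) τ*z (m + 1) τ*z (m + 1) τ*z (m + 2) τ*z (m + 2) τ*z (m + 3) τ*r0*r1*r2 + z m τ*z m τ*r0 - z m τ*z m τ*r0*r1*r2 + (-4)*z m τ*z m τ*rm1*r0 + (-4)*z m τ*z m τ*rm2*r0 + (16)*z m τ*z m τ*rm2*rm1*r0 - z m τ*z m τ*z (m + 3) τ*r0*r1*r2 + z m τ*z m τ*z (m + 2) τ*z (m + 2) τ*r0*r1*r2 + z m τ*z m τ*z (m + 2) τ*z (m + 2) τ*z (m + 3) τ*r0*r1*r2 - z m τ*z m τ*z (m + 1) τ*r0 + (2)*z m τ*z m τ*z (m + 1) τ*r0*r1*r2 + (4)*z m τ*z m τ*z (m + 1) τ*rm1*r0 + (4)*z m τ*z m τ*z (m + 1)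 τ*rm2*r0 + (-16)*z m τ*z m τ*z (m + 1) τ*rm2*rm1*r0 + (2)*z m τ*z m τ*z (m + 1) τ*z (m + 3) τ*r0*r1*r2 + (-2)*z m τ*z m τ*z (m + 1) τ*z (m + 2) τ*z (m + 2) τ*r0*r1*r2 + (-2)*z m τ*z m τ*z (m + 1) τ*z (m + 2) τ*z (m + 2) τ*z (m + 3) τ*r0*r1*r2 + (-5)*z m τ*z m τ*z (m + 1) τ*z (m + 1) τ*r0 + (4)*z m τ*z m τ*z (m + 1) τ*z (m + 1) τ*r0*r1*r2 + (20)*z m τ*z m τ*z (m + 1) τ*z (m + 1) τ*rm1*r0 + (20)*z m τ*z m τ*z (m + 1) τ*z (m + 1) τ*rm2*r0 + (-80)*z m τ*z m τ*z (m + 1) τ*z (m + 1) τ*rm2*rm1*r0 + (4)*z m τ*z m τ*z (m + 1) τ*z (m + 1) τ*z (m + 3) τ*r0*r1*r2 + (-4)*z m τ*z m τ*z (m + 1) τ*z (m + 1) τ*z (m + 2) τ*z (m + 2) τ*r0*r1*r2 + (-4)*z m τ*z m τ*z (m + 1) τ*z (m + 1) τ*z (m + 2) τ*z (m + 2) τ*z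 (m + 3) τ*r0*r1*r2 + (-3)*z m τ*z m τ*z (m + 1) τ*z (m + 1) τ*z (m + 1) τ*r0 + (-2)*z m τ*z m τ*z (m + 1) τ*z (m + 1) τ*z (m + 1) τ*r0*r1*r2 + (12)*z m τ*z m τ*z (m + 1) τ*z (m + 1) τ*z (m + 1) τ*rm1*r0 + (12)*z m τ*z m τ*z (m + 1) τ*z (m + 1) τ*z (m + 1) τ*rm2*r0 + (-48)*z m τ*z m τ*z (m + 1) τ*z (m + 1) τ*z (m + 1) τ*rm2*rm1*r0 + (-2)*z m τ*z m τ*z (m + 1) τ*z (m + 1) τ*z (m + 1) τ*z (m + 3) τ*r0*r1*r2 + (2)*z m τ*z m τ*z (m + 1) τ*z (m + 1) τ*z (m + 1) τ*z (m + 2) τ*z (m + 2) τ*r0*r1*r2 + (2)*z m τ*z m τ*z (m + 1) τ*z (m + 1) τ*z (m + 1) τ*z (m + 2) τ*z (m + 2) τ*z (m + 3) τ*r0*r1*r2 + (-3)*z m τ*z m τ*z (m + 1) τ*z (m + 1) τ*z (m + 1) τ*z (m + 1) τ*r0*r1*r2 + (-3)*z m τ*z m τ*z (m + 1) τ*z (m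 + 1) τ*z (m + 1) τ*z (m + 1) τ*z (m + 3) τ*r0*r1*r2 + (3)*z m τ*z m τ*z (m + 1) τ*z (m + 1) τ*z (m + 1) τ*z (m + 1) τ*z (m + 2) τ*z (m + 2) τ*r0*r1*r2 + (3)*z m τ*z m τ*z (m + 1) τ*z (m + 1) τ*z (m + 1) τ*z (m + 1) τ*z (m + 2) τ*z (m + 2) τ*z (m + 3) τ*r0*r1*r2 + z m τ*z m τ*z m τ*r0 - z m τ*z m τ*z m τ*r0*r1*r2 + (-4)*z m τ*z m τ*z m τ*rm1*r0 + (-4)*z m τ*z m τ*z m τ*rm2*r0 + (16)*z m τ*z m τ*z m τ*rm2*rm1*r0 - z m τ*z m τ*z m τ*z (m + 3) τ*r0*r1*r2 + z m τ*z m τ*z m τ*z (m + 2) τ*z (m + 2) τ*r0*r1*r2 + z m τ*z m τ*z m τ*z (m + 2) τ*z (m + 2) τ*z (m + 3) τ*r0*r1*r2 + (3)*z m τ*z m τ*z m τ*z (m + 1) τ*r0 + (-2)*z m τ*z m τ*z m τ*z (m + 1) τ*r0*r1*r2 + (-12)*z m τ*z m τ*z m τ*z (m + 1) τ*rm1*r0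 + (-12)*z m τ*z m τ*z m τ*z (m + 1) τ*rm2*r0 + (48)*z m τ*z m τ*z m τ*z (m + 1) τ*rm2*rm1*r0 + (-2)*z m τ*z m τ*z m τ*z (m + 1) τ*z (m + 3) τ*r0*r1*r2 + (2)*z m τ*z m τ*z m τ*z (m + 1) τ*z (m + 2) τ*z (m + 2) τ*r0*r1*r2 + (2)*z m τ*z m τ*z m τ*z (m + 1) τ*z (m + 2) τ*z (m + 2) τ*z (m + 3) τ*r0*r1*r2 + (3)*z m τ*z m τ*z m τ*z (m + 1) τ*z (m + 1) τ*r0 + (-12)*z m τ*z m τ*z m τ*z (m + 1) τ*z (m + 1) τ*rm1*r0 + (-12)*z m τ*z m τ*z m τ*z (m + 1) τ*z (m + 1) τ*rm2*r0 + (48)*z m τ*z m τ*z m τ*z (m + 1) τ*z (m + 1) τ*rm2*rm1*r0 + z m τ*z m τ*z m τ*z (m + 1) τ*z (m + 1) τ*z (m + 1) τ*r0 + (2)*z m τ*z m τ*z m τ*z (m + 1) τ*z (m + 1) τ*z (m + 1) τ*r0*r1*r2 + (-4)*z m τ*z m τ*z m τ*z (m + 1) τ*z (m + 1) τ*z (m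 + 1) τ*rm1*r0 + (-4)*z m τ*z m τ*z m τ*z (m + 1) τ*z (m + 1) τ*z (m + 1) τ*rm2*r0 + (16)*z m τ*z m τ*z m τ*z (m + 1) τ*z (m + 1) τ*z (m + 1) τ*rm2*rm1*r0 + (2)*z m τ*z m τ*z m τ*z (m + 1) τ*z (m + 1) τ*z (m + 1) τ*z (m + 3) τ*r0*r1*r2 + (-2)*z m τ*z m τ*z m τ*z (m + 1) τ*z (m + 1) τ*z (m + 1) τ*z (m + 2) τ*z (m + 2) τ*r0*r1*r2 + (-2)*z m τ*z m τ*z m τ*z (m + 1) τ*z (m + 1) τ*z (m + 1) τ*z (m + 2) τ*z (m + 2) τ*z (m + 3) τ*r0*r1*r2 + z m τ*z m τ*z m τ*z (m + 1) τ*z (m + 1) τ*z (m + 1) τ*z (m + 1) τ*r0*r1*r2 + z m τ*z m τ*z m τ*z (m + 1) τ*z (m + 1) τ*z (m + 1) τ*z (m + 1) τ*z (m + 3) τ*r0*r1*r2 - z m τ*z m τ*z m τ*z (m + 1) τ*z (m + 1) τ*z (m + 1) τ*z (m + 1) τ*z (m + 2) τ*z (m + 2) τ*r0*r1*r2 - z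 m τ*z m τ*z m τ*z (m + 1) τ*z (m + 1) τ*z (m + 1) τ*z (m + 1) τ*z (m + 2) τ*z (m + 2) τ*z (m + 3) τ*r0*r1*r2) * hr0 + ((-12)*r2 + (4)*z (m + 3) τ*r2 + (-4)*z (m + 2) τ*r2 + (-4)*z (m + 2) τ*z (m + 3) τ*r2 + (-12)*z (m + 1) τ*r2 + (4)*z (m + 1) τ*z (m + 3) τ*r2 + (-4)*z (m + 1) τ*z (m + 2) τ*r2 + (-4)*z (m + 1) τ*z (m + 2) τ*z (m + 3) τ*r2 + (12)*z m τ*r2 + (-4)*z m τ*z (m + 3) τ*r2 + (4)*z m τ*z (m + 2) τ*r2 + (4)*z m τ*z (m + 2) τ*z (m + 3) τ*r2 + (12)*z m τ*z (m + 1) τ*r2 + (-4)*z m τ*z (m + 1) τ*z (m + 3) τ*r2 + (4)*z m τ*z (m + 1) τ*z (m + 2) τ*r2 + (4)*z m τ*z (m + 1) τ*z (m + 2) τ*z (m + 3) τ*r2) * hr1 + ((-4)*1 + (16)*r1 + (-4)*z (m + 1) τ + (16)*z (m + 1) τ*r1 + (4)*z m τ + (-16)*z m τ*r1 + (4)*z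 m τ*z (m + 1) τ + (-16)*z m τ*z (m + 1) τ*r1) * hr2

set_option maxHeartbeats 1000000 in
theorem stmt_18 (z : ℤ → ℝ → ℝ)
    (hzne : ∀ (n : ℤ) (t : ℝ), (z (n + 1) t + 1) * (z n t - 1) + 4 ≠ 0)
    (Ω : ℤ → ℝ → ℝ)
    (hΩ : ∀ (n : ℤ) (t : ℝ), Ω n t =
      1 / (((z (n + 1) t + 1) * (z n t - 1) + 4) * ((z n t + 1) * (z (n - 1) t - 1) + 4)))
    (hz : ∀ (n : ℤ) (t : ℝ), HasDerivAt (z n)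
      (4 * ((z n t) ^ 2 - 1) * (2 * Ω n t + (z (n - 1) t - 1) * Ω (n - 1) t
        - (z (n + 1) t + 1) * Ω (n + 1) t)) t)
    (u : ℤ → ℝ → ℝ)
    (hu : ∀ (n : ℤ) (t : ℝ), u n t =
      4 * (z (n + 2) t + 1) * ((z (n + 1) t) ^ 2 - 1) * (z n t - 1)
        / (((z (n + 3) t + 1) * (z (n + 2) t - 1) + 4)
          * ((z (n + 2) t + 1) * (z (n + 1) t - 1) + 4)
          * ((z (n + 1) t + 1) * (z n t - 1) + 4))) :
    ∀ (n : ℤ) (t : ℝ), HasDerivAt (u n)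
      (u n t * (u (n + 2) t + u (n + 1) t - u (n - 1) t - u (n - 2) t)) t := by
  apply inb_from_minb (Sf z) u (miura_step z hzne Ω hΩ hz)
  intro m τ
  have hA0 : (z (m + 1) τ + 1) * (z m τ - 1) + 4 ≠ 0 := hzne m τ
  have hA1 : (z (m + 2) τ + 1) * (z (m + 1) τ - 1) + 4 ≠ 0 := by
    have := hzne (m + 1) τ; rwa [show m + 1 + 1 = m + 2 from by ring] at this
  have hA2 : (z (m + 3) τ + 1) * (z (m + 2) τ - 1) + 4 ≠ 0 := by
    have := hzne (m + 2) τ; rwa [show m + 2 + 1 = m + 3 from by ring] at this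
  rw [hu m τ]
  simp only [Sf, show m + 1 + 1 = m + 2 from by ring, show m + 2 + 1 = m + 3 from by ring]
  field_simp
  ring
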